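/- arXiv:2504.13066 — 4 statements merged into one kernel-verified Lean document; each statement's English description precedes it below -/
import Mathlib

section
/- Define ψ̃_m^{(2)}(u,v) := Σ_{i=0}^{m} [(-m)_i / i!]·(n_1−m+1)_i·(n_2−m+1)_{m−i}·(−v)_i·(−u)_{m−i}, where (a)_j denotes the Pochhammer symbol. If u, v are nonnegative integers with u + v < m, then ψ̃_m^{(2)}(u,v) = 0. -/
/-- Rising factorial (Pochhammer symbol) `(a)_j = a(a+1)⋯(a+j-1)`. -/
def poch (a : ℚ) (j : ℕ) : ℚ := ∏ i ∈ Finset.range j, (a + i)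

/-- The two-variable Hahn polynomial factor `ψ̃ₘ⁽²⁾(u,v)`. -/
def psi2 (n1 n2 m u v : ℕ) : ℚ :=
  ∑ i ∈ Finset.range (m + 1),
    poch (-(m : ℚ)) i / (Nat.factorial i : ℚ) *
      poch ((n1 : ℚ) - m + 1) i * poch ((n2 : ℚ) - m + 1) (m - i) *
      poch (-(v : ℚ)) i * poch (-(u : ℚ)) (m - i)

lemma poch_neg_nat_eq_zero (k j : ℕ) (hj : k < j) : poch (-(k : ℚ)) j = 0 := by
  apply Finset.prod_eq_zero (Finset.mem_range.mpr hj)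
  simp

theorem psi2_vanish (n1 n2 m u v : ℕ) (h : u + v < m) : psi2 n1 n2 m u v = 0 := by
  unfold psi2
  apply Finset.sum_eq_zero
  intro i hi
  rcases lt_or_ge v i with hv | hv
  · rw [poch_neg_nat_eq_zero v i hv]; ring
  · have hu : u < m - i := by omega
    rw [poch_neg_nat_eq_zero u (m - i) hu]; ring
end

section
/- With ψ̃_m^{(2)} as defined, the ratio ψ̃_m^{(2)}(m,1)/ψ̃_m^{(2)}(m,0) = (n_2 − m(n_1−m+1))/n_2, whenever n_2 ≥ m ≥ 1. -/
lemma poch_zero (a : ℚ) : poch a 0 = 1 := by simp [poch]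

lemma poch_succ (a : ℚ) (j : ℕ) : poch a (j + 1) = poch a j * (a + j) := by
  simp [poch, Finset.prod_range_succ]

lemma poch_one (a : ℚ) : poch a 1 = a := by simp [poch]

lemma poch_neg_cast_eq_zero (v i : ℕ) (h : v < i) : poch (-(v : ℚ)) i = 0 := by
  apply Finset.prod_eq_zero (Finset.mem_range.mpr h)
  simp

lemma poch_neg_cast_ne_zero (m j : ℕ) (h : j ≤ m) : poch (-(m : ℚ)) j ≠ 0 := by
  unfold poch
  rw [Finset.prod_ne_zero_iff]
  intro i hi
  have hi' : i < m := lt_of_lt_of_le (Finset.mem_range.mp hi) h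
  have : (i : ℚ) < m := by exact_mod_cast hi'
  intro hc
  linarith

theorem psi2_m_one_ratio (n1 n2 m : ℕ) (hm : 1 ≤ m) (hn2 : m ≤ n2) :
    psi2 n1 n2 m m 1 / psi2 n1 n2 m m 0 =
      ((n2 : ℚ) - m * ((n1 : ℚ) - m + 1)) / (n2 : ℚ) := by
  obtain ⟨k, rfl⟩ : ∃ k, m = k + 1 := ⟨m - 1, (Nat.succ_pred_eq_of_pos hm).symm⟩
  have hn2' : ((k : ℚ) + 1) ≤ n2 := by exact_mod_cast hn2
  set A := poch (-(((k : ℕ) + 1 : ℕ) : ℚ)) k with hA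
  set B := poch ((n2 : ℚ) - ((k : ℕ) + 1 : ℕ) + 1) k with hB
  have hAne : A ≠ 0 := poch_neg_cast_ne_zero (k + 1) k (Nat.le_succ k)
  have hBne : B ≠ 0 := by
    rw [hB]
    unfold poch
    rw [Finset.prod_ne_zero_iff]
    intro i _
    have : (0 : ℚ) ≤ i := by positivity
    push_cast
    intro hc
    linarith
  have hn2ne : (n2 : ℚ) ≠ 0 := by
    have : 0 < n2 := by omega
    exact_mod_cast this.ne'
  have key1 : poch ((n2 : ℚ) - ((k : ℕ) + 1 : ℕ) + 1) (k + 1) = B * n2 := by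
    rw [poch_succ, hB]
    push_cast
    ring_nf
  have key2 : poch (-(((k : ℕ) + 1 : ℕ) : ℚ)) (k + 1) = A * (-1) := by
    rw [poch_succ, hA]
    push_cast
    ring_nf
  have e0 : psi2 n1 n2 (k + 1) (k + 1) 0 = -(n2 : ℚ) * A * B := by
    unfold psi2
    rw [Finset.sum_eq_single 0]
    · simp only [Nat.sub_zero, Nat.factorial_zero, poch_zero, key1, key2]
      push_cast
      ring
    · intro i _ hi
      rw [poch_neg_cast_eq_zero 0 i (Nat.pos_of_ne_zero hi)]
      ring
    · intro h
      exact absurd (Finset.mem_range.mpr (Nat.succ_pos _)) h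
  have e1 : psi2 n1 n2 (k + 1) (k + 1) 1 =
      -(n2 : ℚ) * A * B + ((k : ℚ) + 1) * ((n1 : ℚ) - ((k : ℚ) + 1) + 1) * A * B := by
    unfold psi2
    rw [← Finset.sum_subset (Finset.range_subset_range.mpr (by omega : 2 ≤ k + 1 + 1))]
    · rw [Finset.sum_range_succ, Finset.sum_range_one]
      simp only [Nat.sub_zero, Nat.factorial_zero, Nat.factorial_one, poch_zero, poch_one,
        key1, key2, Nat.add_sub_cancel]
      rw [← hA, ← hB]
      push_cast
      ring
    · intro i _ hi
      have h2 : 2 ≤ i := by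
        by_contra h
        exact hi (Finset.mem_range.mpr (by omega))
      rw [poch_neg_cast_eq_zero 1 i (by omega)]
      ring
  rw [e0, e1]
  field_simp
  push_cast
  ring
end

section
/- With f(u) := (−1)^u·(n_2−k+1)_u·(n_1−k+1)_{k−u} and v = k−u, for all 0 ≤ u ≤ k: ((n_1−u)(n_2−v) + uv)·f(u) + u(n_2−v)·f(u−1) + v(n_1−u)·f(u+1) = (n_1·n_2 − (n_1+n_2)k + k² − k)·f(u). -/
/-- `f(u) = (−1)ᵘ (n₂−k+1)ᵤ (n₁−k+1)_{k−u}`. -/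
def fInv (n1 n2 k u : ℕ) : ℚ :=
  (-1 : ℚ) ^ u * poch ((n2 : ℚ) - k + 1) u * poch ((n1 : ℚ) - k + 1) (k - u)

lemma step_up (n1 n2 k u : ℕ) (hu : u < k) :
    ((n1 : ℚ) - u) * fInv n1 n2 k (u + 1) =
      -(((n2 : ℚ) - k + 1 + u)) * fInv n1 n2 k u := by
  unfold fInv
  have hk : k - u = (k - (u + 1)) + 1 := by omega
  have hc : ((k - (u + 1) : ℕ) : ℚ) = (k : ℚ) - u - 1 := by
    rw [Nat.cast_sub hu]; push_cast; ring
  rw [hk, poch_succ, poch_succ, pow_succ, hc]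
  ring

lemma step_down (n1 n2 k u : ℕ) (h0 : 1 ≤ u) (hu : u ≤ k) :
    ((n2 : ℚ) - k + u) * fInv n1 n2 k (u - 1) =
      -(((n1 : ℚ) - u + 1)) * fInv n1 n2 k u := by
  obtain ⟨w, rfl⟩ : ∃ w, u = w + 1 := ⟨u - 1, by omega⟩
  simp only [Nat.add_sub_cancel] at *
  have hk : k - w = (k - (w + 1)) + 1 := by omega
  have hc : ((k - (w + 1) : ℕ) : ℚ) = (k : ℚ) - (w + 1) := by
    rw [Nat.cast_sub hu]; push_cast; ring
  unfold fInv
  rw [hk, poch_succ, poch_succ, pow_succ, hc]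
  push_cast
  ring

theorem fInv_eigen (n1 n2 k : ℕ) (hk1 : k ≤ n1) (hk2 : k ≤ n2)
    (u : ℕ) (hu : u ≤ k) :
    (((n1 : ℚ) - u) * ((n2 : ℚ) - (k - u : ℕ)) + (u : ℚ) * ((k - u : ℕ) : ℚ)) *
          fInv n1 n2 k u +
        (u : ℚ) * ((n2 : ℚ) - (k - u : ℕ)) * fInv n1 n2 k (u - 1) +
        ((k - u : ℕ) : ℚ) * ((n1 : ℚ) - u) * fInv n1 n2 k (u + 1) =
      ((n1 : ℚ) * n2 - ((n1 : ℚ) + n2) * k + (k : ℚ) ^ 2 - k) * fInv n1 n2 k u := by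
  have hv : ((k - u : ℕ) : ℚ) = (k : ℚ) - u := Nat.cast_sub hu
  have key2 : (u : ℚ) * ((n2 : ℚ) - ((k : ℚ) - u)) * fInv n1 n2 k (u - 1) =
      -(u : ℚ) * ((n1 : ℚ) - u + 1) * fInv n1 n2 k u := by
    rcases Nat.eq_zero_or_pos u with h0 | h0
    · simp [h0]
    · have h := step_down n1 n2 k u h0 hu
      have : (u : ℚ) * (((n2 : ℚ) - k + u) * fInv n1 n2 k (u - 1)) =
          (u : ℚ) * (-(((n1 : ℚ) - u + 1)) * fInv n1 n2 k u) := by rw [h]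
      linarith [this]
  have key3 : ((k : ℚ) - u) * ((n1 : ℚ) - u) * fInv n1 n2 k (u + 1) =
      -((k : ℚ) - u) * ((n2 : ℚ) - k + 1 + u) * fInv n1 n2 k u := by
    rcases eq_or_lt_of_le hu with h0 | h0
    · subst h0; ring_nf
    · have h := step_up n1 n2 k u h0
      have : ((k : ℚ) - u) * (((n1 : ℚ) - u) * fInv n1 n2 k (u + 1)) =
          ((k : ℚ) - u) * (-(((n2 : ℚ) - k + 1 + u)) * fInv n1 n2 k u) := by rw [h]
      linarith [this]
  rw [hv]
  linear_combination key2 + key3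
end

section
/- For the two-factor Young subgroup S_{n_1}×S_{n_2} ≤ S_N (N = n_1 + n_2) and the two-cycle g_2 exchanging one point of each block, the spherical function of the irreducible representation [N−k, k] at g_2 equals (n_1·n_2 − (n_1+n_2)k + k² − k)/(n_1·n_2), for 0 ≤ k ≤ min(n_1, n_2). -/
open Finset

/-- The character of the irreducible representation `[N−k, k]` of `S_N`,
expressed as (number of `k`-subsets fixed by `w`) minus
(number of `(k−1)`-subsets fixed by `w`). -/
def chiTwoRow (N k : ℕ) (w : Equiv.Perm (Fin N)) : ℚ :=
  ((Finset.univ.filter fun s : Finset (Fin N) => s.card = k ∧ s.image ⇑w = s).card : ℚ) -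
    ((Finset.univ.filter fun s : Finset (Fin N) => s.card + 1 = k ∧ s.image ⇑w = s).card : ℚ)

/-- The Young subgroup `S_{n₁} × S_{n₂}` of `S_{n₁+n₂}`: permutations preserving
the first block `{i : i < n₁}` (hence also the second block). -/
def youngTwo (n1 n2 : ℕ) : Finset (Equiv.Perm (Fin (n1 + n2))) :=
  Finset.univ.filter fun w => ∀ i : Fin (n1 + n2), ((w i : ℕ) < n1 ↔ (i : ℕ) < n1)

namespace SphericalAux

/-- first block as a finset -/
def bl1 (n1 n2 : ℕ) : Finset (Fin (n1 + n2)) := Finset.univ.filter fun x => (x : ℕ) < n1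

/-- second block as a finset -/
def bl2 (n1 n2 : ℕ) : Finset (Fin (n1 + n2)) := Finset.univ.filter fun x => ¬ (x : ℕ) < n1

lemma mem_bl1 {n1 n2 : ℕ} {x : Fin (n1 + n2)} : x ∈ bl1 n1 n2 ↔ (x : ℕ) < n1 := by
  simp [bl1]

lemma mem_bl2 {n1 n2 : ℕ} {x : Fin (n1 + n2)} : x ∈ bl2 n1 n2 ↔ ¬ (x : ℕ) < n1 := by
  simp [bl2]

lemma bl_union (n1 n2 : ℕ) : bl1 n1 n2 ∪ bl2 n1 n2 = Finset.univ :=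
  Finset.filter_union_filter_not_eq _ _

lemma bl_disjoint (n1 n2 : ℕ) : Disjoint (bl1 n1 n2) (bl2 n1 n2) :=
  Finset.disjoint_filter_filter_not _ _ _

lemma card_bl1 (n1 n2 : ℕ) : (bl1 n1 n2).card = n1 := by
  have h : (bl1 n1 n2).card = (Finset.univ : Finset (Fin n1)).card := by
    refine Finset.card_bij' (s := bl1 n1 n2) (t := (Finset.univ : Finset (Fin n1)))
        (fun x hx => (⟨(x : ℕ), by exact mem_bl1.mp hx⟩ : Fin n1))
        (fun y _ => Fin.castAdd n2 y) ?_ ?_ ?_ ?_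
    · intro x hx; exact Finset.mem_univ _
    · intro y hy; exact mem_bl1.mpr (by simpa using y.isLt)
    · intro x hx; apply Fin.ext; rfl
    · intro y hy; apply Fin.ext; rfl
  simp [h]

lemma card_bl2 (n1 n2 : ℕ) : (bl2 n1 n2).card = n2 := by
  have h : bl2 n1 n2 = Finset.univ \ bl1 n1 n2 := Finset.filter_not _ _
  rw [h, Finset.card_sdiff_of_subset (Finset.subset_univ _), Finset.card_univ, card_bl1]
  simp

lemma image_perm_eq_iff {β : Type*} [DecidableEq β] (h : Equiv.Perm β) (S : Finset β) :
    S.image ⇑h = S ↔ ∀ x, h x ∈ S ↔ x ∈ S := by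
  constructor
  · intro hS x
    constructor
    · intro hx
      rw [← hS] at hx
      rcases Finset.mem_image.mp hx with ⟨y, hy, hyx⟩
      rwa [← h.injective hyx]
    · intro hx; rw [← hS]; exact Finset.mem_image_of_mem _ hx
  · intro hp
    ext y
    rw [Finset.mem_image]
    constructor
    · rintro ⟨x, hx, rfl⟩; exact (hp x).mpr hx
    · intro hy
      exact ⟨h.symm y, (hp _).mp (by rwa [Equiv.apply_symm_apply]), h.apply_symm_apply y⟩

lemma mem_image_swap {β : Type*} [DecidableEq β] (a b : β) (S : Finset β) (y : β) :
    y ∈ S.image ⇑(Equiv.swap a b) ↔ Equiv.swap a b y ∈ S := by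
  rw [Finset.mem_image]
  constructor
  · rintro ⟨x, hx, rfl⟩; rwa [Equiv.swap_apply_self]
  · intro hy; exact ⟨_, hy, Equiv.swap_apply_self _ _ _⟩

lemma image_swap_eq_self {β : Type*} [DecidableEq β] {a b : β} {S : Finset β}
    (hiff : a ∈ S ↔ b ∈ S) : S.image ⇑(Equiv.swap a b) = S := by
  ext y
  rw [mem_image_swap]
  rcases eq_or_ne y a with rfl | hya
  · rw [Equiv.swap_apply_left]; exact hiff.symm
  rcases eq_or_ne y b with rfl | hyb
  · rw [Equiv.swap_apply_right]; exact hiff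
  · rw [Equiv.swap_apply_of_ne_of_ne hya hyb]

lemma young_iff {n1 n2 : ℕ} {h : Equiv.Perm (Fin (n1 + n2))} :
    h ∈ youngTwo n1 n2 ↔ ∀ i : Fin (n1 + n2), ((h i : ℕ) < n1 ↔ (i : ℕ) < n1) := by
  simp [youngTwo]

lemma young_image_inter {n1 n2 : ℕ} {h : Equiv.Perm (Fin (n1 + n2))}
    (hy : h ∈ youngTwo n1 n2) (S : Finset (Fin (n1 + n2))) :
    (S.image ⇑h) ∩ bl1 n1 n2 = (S ∩ bl1 n1 n2).image ⇑h := by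
  have hy' := young_iff.mp hy
  ext y
  simp only [Finset.mem_inter, Finset.mem_image, mem_bl1]
  constructor
  · rintro ⟨⟨x, hx, rfl⟩, hb⟩
    exact ⟨x, ⟨hx, (hy' x).mp hb⟩, rfl⟩
  · rintro ⟨x, ⟨hx, hb⟩, rfl⟩
    exact ⟨⟨x, hx, rfl⟩, (hy' x).mpr hb⟩

lemma image_swap_inter_1 {n1 n2 : ℕ} {a b : Fin (n1 + n2)} (ha : (a : ℕ) < n1)
    (hb : ¬ (b : ℕ) < n1) {S : Finset (Fin (n1 + n2))} (haS : a ∈ S) (hbS : b ∉ S) :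
    S.image ⇑(Equiv.swap a b) ∩ bl1 n1 n2 = (S ∩ bl1 n1 n2).erase a := by
  ext y
  simp only [Finset.mem_inter, Finset.mem_erase, mem_bl1, mem_image_swap]
  rcases eq_or_ne y a with rfl | hya
  · rw [Equiv.swap_apply_left]
    simp [hbS]
  rcases eq_or_ne y b with rfl | hyb
  · rw [Equiv.swap_apply_right]
    simp [hb]
  · rw [Equiv.swap_apply_of_ne_of_ne hya hyb]
    tauto

lemma image_swap_inter_2 {n1 n2 : ℕ} {a b : Fin (n1 + n2)} (ha : (a : ℕ) < n1)
    (hb : ¬ (b : ℕ) < n1) {S : Finset (Fin (n1 + n2))} (haS : a ∉ S) (hbS : b ∈ S) :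
    S.image ⇑(Equiv.swap a b) ∩ bl1 n1 n2 = insert a (S ∩ bl1 n1 n2) := by
  ext y
  simp only [Finset.mem_inter, Finset.mem_insert, mem_bl1, mem_image_swap]
  rcases eq_or_ne y a with rfl | hya
  · rw [Equiv.swap_apply_left]
    simp [hbS, ha]
  rcases eq_or_ne y b with rfl | hyb
  · rw [Equiv.swap_apply_right]
    constructor
    · rintro ⟨-, h⟩; exact absurd h hb
    · rintro (rfl | ⟨-, h⟩)
      · exact absurd ha hb
      · exact absurd h hb
  · rw [Equiv.swap_apply_of_ne_of_ne hya hyb]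
    tauto


lemma gauss1 (n : ℕ) : ∑ j ∈ range n, (j : ℚ) = n * (n - 1) / 2 := by
  induction n with
  | zero => simp
  | succ m ih => rw [Finset.sum_range_succ, ih]; push_cast; ring

lemma gauss2 (n : ℕ) : ∑ j ∈ range n, (j : ℚ) ^ 2 = n * (n - 1) * (2 * n - 1) / 6 := by
  induction n with
  | zero => simp
  | succ m ih => rw [Finset.sum_range_succ, ih]; push_cast; ring

lemma ps1 (x y : ℚ) (c : ℕ) :
    ∑ j ∈ range (c + 1), ((x - j) * (y - c + j)) =
      (c + 1) * (x * y - x * c) + (x - y + c) * ((c + 1) * c / 2)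
        - (c + 1) * c * (2 * (c + 1) - 1) / 6 := by
  have h1 := gauss1 (c + 1)
  have h2 := gauss2 (c + 1)
  calc ∑ j ∈ range (c + 1), ((x - j) * (y - c + j))
      = ∑ j ∈ range (c + 1), ((x * y - x * c) + (x - y + c) * (j : ℚ) - (j : ℚ) ^ 2) :=
        Finset.sum_congr rfl fun j _ => by ring
    _ = _ := by
        rw [Finset.sum_sub_distrib, Finset.sum_add_distrib, Finset.sum_const, card_range,
          ← Finset.mul_sum, h1, h2, nsmul_eq_mul]
        push_cast
        ring

lemma ps2 (m : ℕ) :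
    ∑ j ∈ range (m + 1), (((j : ℚ) + 1) * ((m : ℚ) - j + 1)) =
      ((m : ℚ) + 2) * (((m : ℚ) + 2) ^ 2 - 1) / 6 := by
  have h1 := gauss1 (m + 1)
  have h2 := gauss2 (m + 1)
  calc ∑ j ∈ range (m + 1), (((j : ℚ) + 1) * ((m : ℚ) - j + 1))
      = ∑ j ∈ range (m + 1), (((m : ℚ) + 1) + (m : ℚ) * (j : ℚ) - (j : ℚ) ^ 2) :=
        Finset.sum_congr rfl fun j _ => by ring
    _ = _ := by
        rw [Finset.sum_sub_distrib, Finset.sum_add_distrib, Finset.sum_const, card_range,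
          ← Finset.mul_sum, h1, h2, nsmul_eq_mul]
        push_cast
        ring

lemma collapse (A B c : ℕ) (ψ : ℕ → ℕ → ℕ)
    (hA : ∀ j1 j2, A < j1 → ψ j1 j2 = 0) (hB : ∀ j1 j2, B < j2 → ψ j1 j2 = 0) :
    (∑ j1 ∈ range (A + 1), ∑ j2 ∈ range (B + 1), if j1 + j2 = c then ψ j1 j2 else 0)
      = ∑ j ∈ range (c + 1), ψ j (c - j) := by
  have hL : (∑ j1 ∈ range (A + 1), ∑ j2 ∈ range (B + 1), if j1 + j2 = c then ψ j1 j2 else 0)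
      = ∑ p ∈ (range (A + 1) ×ˢ range (B + 1)).filter (fun p => p.1 + p.2 = c), ψ p.1 p.2 := by
    rw [Finset.sum_filter, Finset.sum_product]
  rw [hL, ← Finset.Nat.sum_antidiagonal_eq_sum_range_succ ψ c]
  apply Finset.sum_subset
  · intro p hp
    rw [Finset.mem_filter] at hp
    rw [Finset.HasAntidiagonal.mem_antidiagonal]
    exact hp.2
  · intro p hp hnp
    rw [Finset.HasAntidiagonal.mem_antidiagonal] at hp
    rw [Finset.mem_filter, Finset.mem_product, Finset.mem_range, Finset.mem_range] at hnp
    by_cases h1 : p.1 < A + 1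
    · by_cases h2 : p.2 < B + 1
      · exact absurd ⟨⟨h1, h2⟩, hp⟩ hnp
      · exact hB _ _ (by omega)
    · exact hA _ _ (by omega)

lemma gcount {γ δ : Type*} [DecidableEq γ] [DecidableEq δ] (E1 : Finset γ) (E2 : Finset δ)
    (φ1 φ2 : ℕ → ℕ) (c : ℕ) :
    (∑ T1 ∈ E1.powerset, ∑ T2 ∈ E2.powerset,
        if T1.card + T2.card = c then φ1 T1.card * φ2 T2.card else 0)
      = ∑ j1 ∈ range (E1.card + 1), ∑ j2 ∈ range (E2.card + 1),
          (if j1 + j2 = c then E1.card.choose j1 * E2.card.choose j2 * (φ1 j1 * φ2 j2) else 0) := by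
  rw [Finset.sum_powerset]
  refine Finset.sum_congr rfl fun j1 hj1 => ?_
  have h1 : ∀ T1 ∈ E1.powersetCard j1,
      (∑ T2 ∈ E2.powerset, if T1.card + T2.card = c then φ1 T1.card * φ2 T2.card else 0)
        = ∑ j2 ∈ range (E2.card + 1),
            (if j1 + j2 = c then E2.card.choose j2 * (φ1 j1 * φ2 j2) else 0) := by
    intro T1 hT1
    have hc1 : T1.card = j1 := (Finset.mem_powersetCard.mp hT1).2
    rw [Finset.sum_powerset]
    refine Finset.sum_congr rfl fun j2 hj2 => ?_
    have hin : ∀ T2 ∈ E2.powersetCard j2,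
        (if T1.card + T2.card = c then φ1 T1.card * φ2 T2.card else 0)
          = if j1 + j2 = c then φ1 j1 * φ2 j2 else 0 := by
      intro T2 hT2
      rw [hc1, (Finset.mem_powersetCard.mp hT2).2]
    rw [Finset.sum_congr rfl hin, Finset.sum_const, Finset.card_powersetCard, smul_eq_mul,
      mul_ite, mul_zero]
  rw [Finset.sum_congr rfl h1, Finset.sum_const, Finset.card_powersetCard, smul_eq_mul,
    Finset.mul_sum]
  refine Finset.sum_congr rfl fun j2 _ => ?_
  rw [mul_ite, mul_zero]
  exact if_congr Iff.rfl (by ring) rfl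

lemma pcount {γ δ : Type*} [DecidableEq γ] [DecidableEq δ] (E1 : Finset γ) (E2 : Finset δ)
    (φ1 φ2 : ℕ → ℕ) (c : ℕ) :
    (∑ T1 ∈ E1.powerset, ∑ T2 ∈ E2.powerset,
        if T1.card + T2.card = c then φ1 T1.card * φ2 T2.card else 0)
      = ∑ j ∈ range (c + 1),
          E1.card.choose j * E2.card.choose (c - j) * (φ1 j * φ2 (c - j)) := by
  rw [gcount]
  exact collapse E1.card E2.card c
    (fun j1 j2 => E1.card.choose j1 * E2.card.choose j2 * (φ1 j1 * φ2 j2))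
    (fun j1 j2 h => by simp [Nat.choose_eq_zero_of_lt h])
    (fun j1 j2 h => by simp [Nat.choose_eq_zero_of_lt h])

lemma choose1 {n j : ℕ} (hn : 1 ≤ n) (hj : j ≤ n) :
    ((n - 1).choose j * Nat.factorial j * Nat.factorial (n - j) : ℚ)
      = ((n : ℚ) - j) * Nat.factorial (n - 1) := by
  rcases eq_or_lt_of_le hj with rfl | hlt
  · rw [Nat.choose_eq_zero_of_lt (by omega)]
    push_cast
    ring
  · have hj' : j ≤ n - 1 := by omega
    have key := Nat.choose_mul_factorial_mul_factorial hj'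
    have hnat : (n - 1).choose j * Nat.factorial j * Nat.factorial (n - j)
        = (n - j) * Nat.factorial (n - 1) := by
      have hfact : Nat.factorial (n - j) = (n - j) * Nat.factorial (n - 1 - j) := by
        have h : n - j = (n - 1 - j) + 1 := by omega
        rw [h, Nat.factorial_succ]
      rw [hfact, ← key]
      ring
    have := congrArg (fun t : ℕ => (t : ℚ)) hnat
    push_cast [Nat.cast_sub hj] at this
    push_cast
    linarith [this]

lemma choose2 {n j : ℕ} (hj : j + 1 ≤ n) :
    ((n - 1).choose j * Nat.factorial (j + 1) * Nat.factorial (n - (j + 1)) : ℚ)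
      = ((j : ℚ) + 1) * Nat.factorial (n - 1) := by
  have hj' : j ≤ n - 1 := by omega
  have key := Nat.choose_mul_factorial_mul_factorial hj'
  have hnat : (n - 1).choose j * Nat.factorial (j + 1) * Nat.factorial (n - (j + 1))
      = (j + 1) * Nat.factorial (n - 1) := by
    have h1 : n - (j + 1) = n - 1 - j := by omega
    rw [h1, Nat.factorial_succ, ← key]
    ring
  have := congrArg (fun t : ℕ => (t : ℚ)) hnat
  push_cast at this
  linarith [this]


lemma stab_count (n1 n2 : ℕ) (S1 S2 : Finset (Fin (n1 + n2)))
    (hS1 : S1 ⊆ bl1 n1 n2) (hS2 : S2 ⊆ bl2 n1 n2) :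
    ((youngTwo n1 n2).filter fun h : Equiv.Perm (Fin (n1 + n2)) =>
        (S1 ∪ S2).image ⇑h = S1 ∪ S2).card
      = S1.card.factorial * (n1 - S1.card).factorial *
        (S2.card.factorial * (n2 - S2.card).factorial) := by
  classical
  set S := S1 ∪ S2 with hS
  set f : Fin (n1 + n2) → Bool × Bool := fun x => (decide ((x : ℕ) < n1), decide (x ∈ S))
    with hf
  have hmemS1 : ∀ x, x ∈ S1 → (x : ℕ) < n1 := fun x hx => mem_bl1.mp (hS1 hx)
  have hmemS2 : ∀ x, x ∈ S2 → ¬ (x : ℕ) < n1 := fun x hx => mem_bl2.mp (hS2 hx)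
  have hiff : ∀ h : Equiv.Perm (Fin (n1 + n2)),
      (f ∘ ⇑h = f) ↔ ((∀ i : Fin (n1 + n2), ((h i : ℕ) < n1 ↔ (i : ℕ) < n1))
        ∧ S.image ⇑h = S) := by
    intro h
    rw [funext_iff, image_perm_eq_iff, ← forall_and]
    apply forall_congr'
    intro x
    simp only [hf, Function.comp_apply, Prod.mk.injEq, decide_eq_decide]
  have hcard : ((youngTwo n1 n2).filter fun h : Equiv.Perm (Fin (n1 + n2)) =>
      S.image ⇑h = S).card
      = Fintype.card {g : Equiv.Perm (Fin (n1 + n2)) // f ∘ ⇑g = f} := by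
    rw [Fintype.card_subtype, youngTwo, Finset.filter_filter]

    congr 1
    apply Finset.filter_congr
    intro h _
    rw [hiff h]
  rw [hcard, DomMulAct.stabilizer_card, Fintype.prod_prod_type]
  have c_tt : Fintype.card {x : Fin (n1 + n2) // f x = (true, true)} = S1.card := by
    rw [Fintype.card_subtype]
    congr 1
    ext x
    simp only [Finset.mem_filter, Finset.mem_univ, true_and, hf, Prod.mk.injEq,
      decide_eq_true_eq, hS, Finset.mem_union]
    constructor
    · rintro ⟨hx1, hx2 | hx2⟩
      · exact hx2
      · exact absurd hx1 (hmemS2 _ hx2)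
    · intro hx
      exact ⟨hmemS1 _ hx, Or.inl hx⟩
  have c_tf : Fintype.card {x : Fin (n1 + n2) // f x = (true, false)}
      = n1 - S1.card := by
    rw [Fintype.card_subtype]
    have he : (Finset.univ.filter fun x => f x = (true, false)) = bl1 n1 n2 \ S1 := by
      ext x
      simp only [Finset.mem_filter, Finset.mem_univ, true_and, hf, Prod.mk.injEq,
        decide_eq_true_eq, decide_eq_false_iff_not, hS, Finset.mem_union, Finset.mem_sdiff,
        mem_bl1]
      constructor
      · rintro ⟨hx1, hx2⟩
        exact ⟨hx1, fun hx => hx2 (Or.inl hx)⟩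
      · rintro ⟨hx1, hx2⟩
        refine ⟨hx1, ?_⟩
        rintro (h | h)
        · exact hx2 h
        · exact hmemS2 _ h hx1
    rw [he, Finset.card_sdiff_of_subset hS1, card_bl1]
  have c_ft : Fintype.card {x : Fin (n1 + n2) // f x = (false, true)} = S2.card := by
    rw [Fintype.card_subtype]
    congr 1
    ext x
    simp only [Finset.mem_filter, Finset.mem_univ, true_and, hf, Prod.mk.injEq,
      decide_eq_true_eq, decide_eq_false_iff_not, hS, Finset.mem_union]
    constructor
    · rintro ⟨hx1, hx2 | hx2⟩
      · exact absurd (hmemS1 _ hx2) hx1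
      · exact hx2
    · intro hx
      exact ⟨hmemS2 _ hx, Or.inr hx⟩
  have c_ff : Fintype.card {x : Fin (n1 + n2) // f x = (false, false)}
      = n2 - S2.card := by
    rw [Fintype.card_subtype]
    have he : (Finset.univ.filter fun x => f x = (false, false)) = bl2 n1 n2 \ S2 := by
      ext x
      simp only [Finset.mem_filter, Finset.mem_univ, true_and, hf, Prod.mk.injEq,
        decide_eq_false_iff_not, hS, Finset.mem_union, Finset.mem_sdiff, mem_bl2]
      constructor
      · rintro ⟨hx1, hx2⟩
        exact ⟨hx1, fun hx => hx2 (Or.inr hx)⟩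
      · rintro ⟨hx1, hx2⟩
        refine ⟨hx1, ?_⟩
        rintro (h | h)
        · exact hx1 (hmemS1 _ h)
        · exact hx2 h
    rw [he, Finset.card_sdiff_of_subset hS2, card_bl2]
  rw [Fintype.prod_bool, Fintype.prod_bool, Fintype.prod_bool, c_tt, c_tf, c_ft, c_ff]

lemma split_sum (n1 n2 : ℕ) {M : Type*} [AddCommMonoid M]
    (F : Finset (Fin (n1 + n2)) → M) :
    (∑ s : Finset (Fin (n1 + n2)), F s)
      = ∑ S1 ∈ (bl1 n1 n2).powerset, ∑ S2 ∈ (bl2 n1 n2).powerset, F (S1 ∪ S2) := by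
  rw [← Finset.sum_product']
  apply Finset.sum_nbij' (i := fun s : Finset (Fin (n1 + n2)) => (s ∩ bl1 n1 n2, s ∩ bl2 n1 n2))
      (j := fun p : Finset (Fin (n1 + n2)) × Finset (Fin (n1 + n2)) => p.1 ∪ p.2)
  · intro s _
    rw [Finset.mem_product, Finset.mem_powerset, Finset.mem_powerset]
    exact ⟨Finset.inter_subset_right, Finset.inter_subset_right⟩
  · intro p _
    exact Finset.mem_univ _
  · intro s _
    rw [← Finset.inter_union_distrib_left, bl_union, Finset.inter_univ]
  · intro p hp
    rw [Finset.mem_product, Finset.mem_powerset, Finset.mem_powerset] at hp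
    have h1 : p.1 ∩ bl1 n1 n2 = p.1 := Finset.inter_eq_left.mpr hp.1
    have h2 : p.2 ∩ bl1 n1 n2 = ∅ := by
      rw [← Finset.disjoint_iff_inter_eq_empty]
      exact (bl_disjoint n1 n2).symm.mono_left hp.2
    have h3 : p.1 ∩ bl2 n1 n2 = ∅ := by
      rw [← Finset.disjoint_iff_inter_eq_empty]
      exact (bl_disjoint n1 n2).mono_left hp.1
    have h4 : p.2 ∩ bl2 n1 n2 = p.2 := Finset.inter_eq_left.mpr hp.2
    rw [Finset.union_inter_distrib_right, Finset.union_inter_distrib_right,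
      h1, h2, h3, h4, Finset.union_empty, Finset.empty_union]
  · intro s _
    rw [← Finset.inter_union_distrib_left, bl_union, Finset.inter_univ]

lemma msplit {γ : Type*} [DecidableEq γ] {M : Type*} [AddCommMonoid M]
    (B : Finset γ) (x : γ) (hx : x ∈ B) (F : Finset γ → M) :
    ∑ T ∈ B.powerset, F T
      = (∑ T ∈ (B.erase x).powerset, F T) + ∑ T ∈ (B.erase x).powerset, F (insert x T) := by
  conv_lhs => rw [← Finset.insert_erase hx]
  exact Finset.sum_powerset_insert (Finset.notMem_erase _ _) _


lemma quad {γ δ : Type*} [DecidableEq γ] [DecidableEq δ] (C1 : Finset γ) (C2 : Finset δ)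
    (aa : γ) (bb : δ) (haa : aa ∈ C1) (hbb : bb ∈ C2) (body : Finset γ → Finset δ → ℕ) :
    (∑ S1 ∈ C1.powerset, ∑ S2 ∈ C2.powerset, body S1 S2)
      = ∑ T1 ∈ (C1.erase aa).powerset, ∑ T2 ∈ (C2.erase bb).powerset,
          (body T1 T2 + body T1 (insert bb T2) + body (insert aa T1) T2
            + body (insert aa T1) (insert bb T2)) := by
  rw [msplit C1 aa haa]
  have inner : ∀ S1 : Finset γ, (∑ S2 ∈ C2.powerset, body S1 S2)
      = (∑ T2 ∈ (C2.erase bb).powerset, body S1 T2)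
        + ∑ T2 ∈ (C2.erase bb).powerset, body S1 (insert bb T2) :=
    fun S1 => msplit C2 bb hbb _
  rw [Finset.sum_congr rfl (fun T1 _ => inner T1),
    Finset.sum_congr rfl (fun T1 _ => inner (insert aa T1)), ← Finset.sum_add_distrib]
  refine Finset.sum_congr rfl fun T1 _ => ?_
  rw [Finset.sum_add_distrib, Finset.sum_add_distrib, Finset.sum_add_distrib]
  ring

lemma term_out {n1 n2 c j : ℕ} (h1 : 1 ≤ n1) (h2 : 1 ≤ n2) (hc1 : c ≤ n1) (hc2 : c ≤ n2)
    (hj : j ≤ c) :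
    (((n1 - 1).choose j * (n2 - 1).choose (c - j) *
        (Nat.factorial j * Nat.factorial (n1 - j) *
          (Nat.factorial (c - j) * Nat.factorial (n2 - (c - j)))) : ℕ) : ℚ)
      = (Nat.factorial (n1 - 1) : ℚ) * (Nat.factorial (n2 - 1)) *
          (((n1 : ℚ) - j) * ((n2 : ℚ) - c + j)) := by
  have e1 := choose1 (n := n1) (j := j) h1 (by omega)
  have e2 := choose1 (n := n2) (j := c - j) h2 (by omega)
  rw [Nat.cast_sub hj] at e2
  push_cast
  linear_combination (((n2 : ℚ) - c + j) * (Nat.factorial (n2 - 1) : ℚ)) * e1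
    + (((n1 - 1).choose j : ℚ) * (Nat.factorial j : ℚ) * (Nat.factorial (n1 - j) : ℚ)) * e2

lemma term_in {n1 n2 m j : ℕ} (hc1 : m + 2 ≤ n1) (hc2 : m + 2 ≤ n2) (hj : j ≤ m) :
    (((n1 - 1).choose j * (n2 - 1).choose (m - j) *
        (Nat.factorial (j + 1) * Nat.factorial (n1 - (j + 1)) *
          (Nat.factorial ((m - j) + 1) * Nat.factorial (n2 - ((m - j) + 1)))) : ℕ) : ℚ)
      = (Nat.factorial (n1 - 1) : ℚ) * (Nat.factorial (n2 - 1)) *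
          (((j : ℚ) + 1) * ((m : ℚ) - j + 1)) := by
  have e1 := choose2 (n := n1) (j := j) (by omega)
  have e2 := choose2 (n := n2) (j := m - j) (by omega)
  rw [Nat.cast_sub hj] at e2
  push_cast
  linear_combination (((m : ℚ) - j + 1) * (Nat.factorial (n2 - 1) : ℚ)) * e1
    + (((n1 - 1).choose j : ℚ) * (Nat.factorial (j + 1) : ℚ)
        * (Nat.factorial (n1 - (j + 1)) : ℚ)) * e2


lemma in_eval {γ δ : Type*} [DecidableEq γ] [DecidableEq δ] (E1 : Finset γ) (E2 : Finset δ)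
    (φ1 φ2 : ℕ → ℕ) (c : ℕ) :
    (∑ T1 ∈ E1.powerset, ∑ T2 ∈ E2.powerset,
        if T1.card + T2.card + 2 = c then φ1 (T1.card + 1) * φ2 (T2.card + 1) else 0)
      = ∑ j ∈ range (c - 1),
          E1.card.choose j * E2.card.choose (c - 2 - j) * (φ1 (j + 1) * φ2 (c - 2 - j + 1)) := by
  rcases c with _ | c
  · rw [show (0 : ℕ) - 1 = 0 from rfl, Finset.range_zero, Finset.sum_empty]
    exact Finset.sum_eq_zero fun T1 _ => Finset.sum_eq_zero fun T2 _ => if_neg (by omega)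
  rcases c with _ | m
  · rw [show (1 : ℕ) - 1 = 0 from rfl, Finset.range_zero, Finset.sum_empty]
    exact Finset.sum_eq_zero fun T1 _ => Finset.sum_eq_zero fun T2 _ => if_neg (by omega)
  · have hcond : ∀ x y : ℕ, (x + y + 2 = m + 2) ↔ (x + y = m) := by
      intro x y
      omega
    have h0 : (∑ T1 ∈ E1.powerset, ∑ T2 ∈ E2.powerset,
        if T1.card + T2.card + 2 = m + 2 then φ1 (T1.card + 1) * φ2 (T2.card + 1) else 0)
        = ∑ T1 ∈ E1.powerset, ∑ T2 ∈ E2.powerset,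
          (if T1.card + T2.card = m then
            (fun j => φ1 (j + 1)) T1.card * (fun j => φ2 (j + 1)) T2.card else 0) :=
      Finset.sum_congr rfl fun T1 _ => Finset.sum_congr rfl fun T2 _ =>
        if_congr (hcond _ _) rfl rfl
    rw [h0, pcount E1 E2 (fun j => φ1 (j + 1)) (fun j => φ2 (j + 1)) m]
    refine Finset.sum_congr (by congr 1 <;> omega) fun j hj => ?_
    have e1 : m + 2 - 2 - j = m - j := by omega
    rw [e1]

lemma main_count (n1 n2 c : ℕ) (h1 : 1 ≤ n1) (h2 : 1 ≤ n2) (hc1 : c ≤ n1) (hc2 : c ≤ n2)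
    (a b : Fin (n1 + n2)) (ha : (a : ℕ) < n1) (hb : n1 ≤ (b : ℕ)) :
    ((∑ h ∈ youngTwo n1 n2, (Finset.univ.filter fun s : Finset (Fin (n1 + n2)) =>
        s.card = c ∧ s.image ⇑(Equiv.swap a b * h) = s).card : ℕ) : ℚ)
      = (Nat.factorial (n1 - 1) : ℚ) * (Nat.factorial (n2 - 1)) *
          ((((c : ℚ) + 1) * ((n1 : ℚ) * n2 - n1 * c)
            + ((n1 : ℚ) - n2 + c) * (((c : ℚ) + 1) * c / 2)
            - ((c : ℚ) + 1) * c * (2 * ((c : ℚ) + 1) - 1) / 6)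
            + (c : ℚ) * ((c : ℚ) ^ 2 - 1) / 6) := by
  classical
  have hb' : ¬ (b : ℕ) < n1 := not_lt.mpr hb
  have ha1 : a ∈ bl1 n1 n2 := mem_bl1.mpr ha
  have hb2 : b ∈ bl2 n1 n2 := mem_bl2.mpr hb'
  have hinv : ∀ X : Finset (Fin (n1 + n2)),
      (X.image ⇑(Equiv.swap a b)).image ⇑(Equiv.swap a b) = X := by
    intro X
    rw [Finset.image_image]
    have hid : (⇑(Equiv.swap a b) ∘ ⇑(Equiv.swap a b)) = id := by
      funext x
      simp [Equiv.swap_apply_self]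
    rw [hid, Finset.image_id]
  -- Step 1: swap the product into the fixed-set condition
  have step1 : ∀ h ∈ youngTwo n1 n2,
      (Finset.univ.filter fun s : Finset (Fin (n1 + n2)) =>
        s.card = c ∧ s.image ⇑(Equiv.swap a b * h) = s).card
      = ∑ s : Finset (Fin (n1 + n2)),
          if s.card = c ∧ s.image ⇑h = s.image ⇑(Equiv.swap a b) then 1 else 0 := by
    intro h _
    rw [Finset.card_filter]
    refine Finset.sum_congr rfl fun s _ => ?_
    refine if_congr (and_congr_right fun _ => ?_) rfl rfl
    have hcoe : ⇑(Equiv.swap a b * h) = ⇑(Equiv.swap a b) ∘ ⇑h := rfl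
    rw [hcoe, ← Finset.image_image]
    constructor
    · intro he
      calc s.image ⇑h
          = ((s.image ⇑h).image ⇑(Equiv.swap a b)).image ⇑(Equiv.swap a b) := (hinv _).symm
        _ = s.image ⇑(Equiv.swap a b) := by rw [he]
    · intro he
      rw [he, hinv]
  have step2 : ∀ s : Finset (Fin (n1 + n2)),
      (∑ h ∈ youngTwo n1 n2,
        if s.card = c ∧ s.image ⇑h = s.image ⇑(Equiv.swap a b) then 1 else 0)
      = if s.card = c then
          ((youngTwo n1 n2).filter fun h : Equiv.Perm (Fin (n1 + n2)) =>
            s.image ⇑h = s.image ⇑(Equiv.swap a b)).card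
        else 0 := by
    intro s
    by_cases hs : s.card = c
    · rw [if_pos hs, Finset.card_filter]
      exact Finset.sum_congr rfl fun h _ => if_congr (and_iff_right hs) rfl rfl
    · rw [if_neg hs]
      exact Finset.sum_eq_zero fun h _ => if_neg fun hq => hs hq.1
  have step3 : ∀ S1 ∈ (bl1 n1 n2).powerset, ∀ S2 ∈ (bl2 n1 n2).powerset,
      (if (S1 ∪ S2).card = c then
          ((youngTwo n1 n2).filter fun h : Equiv.Perm (Fin (n1 + n2)) =>
            (S1 ∪ S2).image ⇑h = (S1 ∪ S2).image ⇑(Equiv.swap a b)).card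
        else 0)
      = if S1.card + S2.card = c ∧ (a ∈ S1 ↔ b ∈ S2) then
          S1.card.factorial * (n1 - S1.card).factorial *
            (S2.card.factorial * (n2 - S2.card).factorial)
        else 0 := by
    intro S1 hS1 S2 hS2
    rw [Finset.mem_powerset] at hS1 hS2
    have hdisj : Disjoint S1 S2 := (bl_disjoint n1 n2).mono hS1 hS2
    have hcardu : (S1 ∪ S2).card = S1.card + S2.card := Finset.card_union_of_disjoint hdisj
    have haS2 : a ∉ S2 := fun hx => mem_bl2.mp (hS2 hx) ha
    have hbS1 : b ∉ S1 := fun hx => hb' (mem_bl1.mp (hS1 hx))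
    have haU : a ∈ S1 ∪ S2 ↔ a ∈ S1 := by
      rw [Finset.mem_union]
      exact or_iff_left haS2
    have hbU : b ∈ S1 ∪ S2 ↔ b ∈ S2 := by
      rw [Finset.mem_union]
      exact or_iff_right hbS1
    have hSint : (S1 ∪ S2) ∩ bl1 n1 n2 = S1 := by
      rw [Finset.union_inter_distrib_right, Finset.inter_eq_left.mpr hS1,
        Finset.disjoint_iff_inter_eq_empty.mp ((bl_disjoint n1 n2).symm.mono_left hS2),
        Finset.union_empty]
    by_cases hmem : (a ∈ S1 ↔ b ∈ S2)
    · have hsw : (S1 ∪ S2).image ⇑(Equiv.swap a b) = S1 ∪ S2 :=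
        image_swap_eq_self (by rw [haU, hbU]; exact hmem)
      rw [hsw, hcardu]
      by_cases hc : S1.card + S2.card = c
      · rw [if_pos hc, if_pos ⟨hc, hmem⟩, stab_count n1 n2 S1 S2 hS1 hS2]
      · rw [if_neg hc, if_neg fun hcon => hc hcon.1]
    · have hrhs : (if S1.card + S2.card = c ∧ (a ∈ S1 ↔ b ∈ S2) then
          S1.card.factorial * (n1 - S1.card).factorial *
            (S2.card.factorial * (n2 - S2.card).factorial)
        else 0) = 0 := if_neg fun hcon => hmem hcon.2
      rw [hrhs]
      by_cases hc : (S1 ∪ S2).card = c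
      swap
      · rw [if_neg hc]
      rw [if_pos hc, Finset.card_eq_zero, Finset.filter_eq_empty_iff]
      intro h hy heq
      have hIJ : ((S1 ∪ S2).image ⇑h ∩ bl1 n1 n2).card = ((S1 ∪ S2) ∩ bl1 n1 n2).card := by
        rw [young_image_inter hy, Finset.card_image_of_injective _ h.injective]
      rw [heq, hSint] at hIJ
      by_cases haS : a ∈ S1
      · have hbS : b ∉ S2 := fun hbs => hmem ⟨fun _ => hbs, fun _ => haS⟩
        rw [image_swap_inter_1 ha hb' (haU.mpr haS) (fun hbu => hbS (hbU.mp hbu)), hSint,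
          Finset.card_erase_of_mem haS] at hIJ
        have hpos : 0 < S1.card := Finset.card_pos.mpr ⟨a, haS⟩
        omega
      · have hbS : b ∈ S2 := by
          by_contra hbS
          exact hmem ⟨fun h' => absurd h' haS, fun h' => absurd h' hbS⟩
        rw [image_swap_inter_2 ha hb' (fun hau => haS (haU.mp hau)) (hbU.mpr hbS), hSint,
          Finset.card_insert_of_notMem haS] at hIJ
        omega
  -- assemble: reduce to a sum over pairs of subsets of the two blocks
  have big : (∑ h ∈ youngTwo n1 n2, (Finset.univ.filter fun s : Finset (Fin (n1 + n2)) =>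
        s.card = c ∧ s.image ⇑(Equiv.swap a b * h) = s).card)
      = ∑ S1 ∈ (bl1 n1 n2).powerset, ∑ S2 ∈ (bl2 n1 n2).powerset,
          (if S1.card + S2.card = c ∧ (a ∈ S1 ↔ b ∈ S2) then
            S1.card.factorial * (n1 - S1.card).factorial *
              (S2.card.factorial * (n2 - S2.card).factorial)
          else 0) := by
    rw [Finset.sum_congr rfl step1, Finset.sum_comm]
    rw [Finset.sum_congr rfl fun s _ => step2 s]
    rw [split_sum n1 n2 (fun s => if s.card = c then
          ((youngTwo n1 n2).filter fun h : Equiv.Perm (Fin (n1 + n2)) =>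
            s.image ⇑h = s.image ⇑(Equiv.swap a b)).card
        else 0)]
    exact Finset.sum_congr rfl fun S1 hS1 => Finset.sum_congr rfl fun S2 hS2 =>
      step3 S1 hS1 S2 hS2
  -- split off the marked points a and b
  rw [big, quad (bl1 n1 n2) (bl2 n1 n2) a b ha1 hb2]
  have hE1card : ((bl1 n1 n2).erase a).card = n1 - 1 := by
    rw [Finset.card_erase_of_mem ha1, card_bl1]
  have hE2card : ((bl2 n1 n2).erase b).card = n2 - 1 := by
    rw [Finset.card_erase_of_mem hb2, card_bl2]
  -- evaluate the four cases
  have bodies : ∀ T1 ∈ ((bl1 n1 n2).erase a).powerset, ∀ T2 ∈ ((bl2 n1 n2).erase b).powerset,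
      ((if T1.card + T2.card = c ∧ (a ∈ T1 ↔ b ∈ T2) then
          T1.card.factorial * (n1 - T1.card).factorial *
            (T2.card.factorial * (n2 - T2.card).factorial) else 0)
        + (if T1.card + (insert b T2).card = c ∧ (a ∈ T1 ↔ b ∈ insert b T2) then
          T1.card.factorial * (n1 - T1.card).factorial *
            ((insert b T2).card.factorial * (n2 - (insert b T2).card).factorial) else 0)
        + (if (insert a T1).card + T2.card = c ∧ (a ∈ insert a T1 ↔ b ∈ T2) then
          (insert a T1).card.factorial * (n1 - (insert a T1).card).factorial *
            (T2.card.factorial * (n2 - T2.card).factorial) else 0)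
        + (if (insert a T1).card + (insert b T2).card = c
              ∧ (a ∈ insert a T1 ↔ b ∈ insert b T2) then
          (insert a T1).card.factorial * (n1 - (insert a T1).card).factorial *
            ((insert b T2).card.factorial * (n2 - (insert b T2).card).factorial) else 0))
      = (if T1.card + T2.card = c then
          T1.card.factorial * (n1 - T1.card).factorial *
            (T2.card.factorial * (n2 - T2.card).factorial) else 0)
        + (if T1.card + T2.card + 2 = c then
          (T1.card + 1).factorial * (n1 - (T1.card + 1)).factorial *
            ((T2.card + 1).factorial * (n2 - (T2.card + 1)).factorial) else 0) := by
    intro T1 hT1 T2 hT2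
    rw [Finset.mem_powerset] at hT1 hT2
    have haT1 : a ∉ T1 := fun hx => Finset.notMem_erase a _ (hT1 hx)
    have hbT2 : b ∉ T2 := fun hx => Finset.notMem_erase b _ (hT2 hx)
    have hiff : ∀ x y : ℕ, (x + 1 + (y + 1) = c) ↔ (x + y + 2 = c) := by
      intro x y
      omega
    simp only [Finset.card_insert_of_notMem haT1, Finset.card_insert_of_notMem hbT2,
      Finset.mem_insert_self, haT1, hbT2, iff_true, true_iff, false_iff, iff_false,
      and_true, and_false, not_true, not_false_eq_true, if_false, if_true, hiff,
      add_zero, zero_add]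
  rw [Finset.sum_congr rfl fun T1 hT1 => Finset.sum_congr rfl fun T2 hT2 =>
    bodies T1 hT1 T2 hT2]
  have distrib : ∀ f g : Finset (Fin (n1 + n2)) → Finset (Fin (n1 + n2)) → ℕ,
      (∑ T1 ∈ ((bl1 n1 n2).erase a).powerset, ∑ T2 ∈ ((bl2 n1 n2).erase b).powerset,
        (f T1 T2 + g T1 T2))
      = (∑ T1 ∈ ((bl1 n1 n2).erase a).powerset, ∑ T2 ∈ ((bl2 n1 n2).erase b).powerset, f T1 T2)
        + ∑ T1 ∈ ((bl1 n1 n2).erase a).powerset, ∑ T2 ∈ ((bl2 n1 n2).erase b).powerset,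
            g T1 T2 := by
    intro f g
    rw [← Finset.sum_add_distrib]
    exact Finset.sum_congr rfl fun T1 _ => Finset.sum_add_distrib
  rw [distrib]
  have hpc := pcount ((bl1 n1 n2).erase a) ((bl2 n1 n2).erase b)
    (fun j => Nat.factorial j * Nat.factorial (n1 - j))
    (fun j => Nat.factorial j * Nat.factorial (n2 - j)) c
  rw [hpc, in_eval ((bl1 n1 n2).erase a) ((bl2 n1 n2).erase b)
    (fun j => Nat.factorial j * Nat.factorial (n1 - j))
    (fun j => Nat.factorial j * Nat.factorial (n2 - j)) c]
  rw [hE1card, hE2card, Nat.cast_add, Nat.cast_sum, Nat.cast_sum]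
  have hout : (∑ j ∈ range (c + 1), (((n1 - 1).choose j * (n2 - 1).choose (c - j) *
        (Nat.factorial j * Nat.factorial (n1 - j) *
          (Nat.factorial (c - j) * Nat.factorial (n2 - (c - j)))) : ℕ) : ℚ))
      = (Nat.factorial (n1 - 1) : ℚ) * (Nat.factorial (n2 - 1)) *
          (((c : ℚ) + 1) * ((n1 : ℚ) * n2 - n1 * c)
            + ((n1 : ℚ) - n2 + c) * (((c : ℚ) + 1) * c / 2)
            - ((c : ℚ) + 1) * c * (2 * ((c : ℚ) + 1) - 1) / 6) := by
    rw [Finset.sum_congr rfl fun j hj =>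
      term_out h1 h2 hc1 hc2 (by have := Finset.mem_range.mp hj; omega), ← Finset.mul_sum,
      ps1 (n1 : ℚ) (n2 : ℚ) c]
  have hin : (∑ j ∈ range (c - 1), (((n1 - 1).choose j * (n2 - 1).choose (c - 2 - j) *
        (Nat.factorial (j + 1) * Nat.factorial (n1 - (j + 1)) *
          (Nat.factorial (c - 2 - j + 1) * Nat.factorial (n2 - (c - 2 - j + 1)))) : ℕ) : ℚ))
      = (Nat.factorial (n1 - 1) : ℚ) * (Nat.factorial (n2 - 1)) *
          ((c : ℚ) * ((c : ℚ) ^ 2 - 1) / 6) := by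
    rcases c with _ | c
    · norm_num
    rcases c with _ | m
    · norm_num
    · have harg : ∀ j : ℕ, m + 2 - 2 - j = m - j := by
        intro j
        omega
      have hr : m + 2 - 1 = m + 1 := by omega
      rw [hr]
      have hterm : ∀ j ∈ range (m + 1),
          (((n1 - 1).choose j * (n2 - 1).choose (m + 2 - 2 - j) *
            (Nat.factorial (j + 1) * Nat.factorial (n1 - (j + 1)) *
              (Nat.factorial (m + 2 - 2 - j + 1) * Nat.factorial (n2 - (m + 2 - 2 - j + 1))))
              : ℕ) : ℚ)
          = (Nat.factorial (n1 - 1) : ℚ) * (Nat.factorial (n2 - 1)) *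
              (((j : ℚ) + 1) * ((m : ℚ) - j + 1)) := by
        intro j hj
        rw [harg j]
        exact term_in hc1 hc2 (by have := Finset.mem_range.mp hj; omega)
      rw [Finset.sum_congr rfl hterm, ← Finset.mul_sum, ps2 m]
      push_cast
      ring
  rw [hout, hin]
  ring

end SphericalAux

open SphericalAux in
/-- Spherical function of `[N−k,k]` at a two-cycle exchanging one point of each block,
for the two-factor Young subgroup. -/
theorem spherical_two_row_two_cycle (n1 n2 k : ℕ) (h1 : 1 ≤ n1) (h2 : 1 ≤ n2)
    (hk1 : k ≤ n1) (hk2 : k ≤ n2)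
    (a b : Fin (n1 + n2)) (ha : (a : ℕ) < n1) (hb : n1 ≤ (b : ℕ)) :
    (1 / ((Nat.factorial n1 : ℚ) * (Nat.factorial n2 : ℚ))) *
        ∑ h ∈ youngTwo n1 n2, chiTwoRow (n1 + n2) k (Equiv.swap a b * h) =
      ((n1 : ℚ) * n2 - ((n1 : ℚ) + n2) * k + (k : ℚ) ^ 2 - k) / ((n1 : ℚ) * n2) := by
  classical
  have hf1 : ((Nat.factorial n1 : ℚ)) = (n1 : ℚ) * (Nat.factorial (n1 - 1)) := by
    exact_mod_cast (Nat.mul_factorial_pred (by omega : n1 ≠ 0)).symm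
  have hf2 : ((Nat.factorial n2 : ℚ)) = (n2 : ℚ) * (Nat.factorial (n2 - 1)) := by
    exact_mod_cast (Nat.mul_factorial_pred (by omega : n2 ≠ 0)).symm
  have hne1 : (Nat.factorial (n1 - 1) : ℚ) ≠ 0 := Nat.cast_ne_zero.mpr (Nat.factorial_ne_zero _)
  have hne2 : (Nat.factorial (n2 - 1) : ℚ) ≠ 0 := Nat.cast_ne_zero.mpr (Nat.factorial_ne_zero _)
  have hn1 : (n1 : ℚ) ≠ 0 := Nat.cast_ne_zero.mpr (by omega)
  have hn2 : (n2 : ℚ) ≠ 0 := Nat.cast_ne_zero.mpr (by omega)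
  simp only [chiTwoRow]
  rw [Finset.sum_sub_distrib, ← Nat.cast_sum, ← Nat.cast_sum]
  rcases k with _ | m
  · have hz : (∑ h ∈ youngTwo n1 n2, (Finset.univ.filter fun s : Finset (Fin (n1 + n2)) =>
        s.card + 1 = 0 ∧ s.image ⇑(Equiv.swap a b * h) = s).card) = 0 :=
      Finset.sum_eq_zero fun h _ => by
        rw [Finset.card_eq_zero, Finset.filter_eq_empty_iff]
        rintro s - ⟨hs, -⟩
        omega
    rw [hz, main_count n1 n2 0 h1 h2 (by omega) (by omega) a b ha hb, hf1, hf2]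
    push_cast
    field_simp
    ring
  · have he : (∑ h ∈ youngTwo n1 n2, (Finset.univ.filter fun s : Finset (Fin (n1 + n2)) =>
        s.card + 1 = m + 1 ∧ s.image ⇑(Equiv.swap a b * h) = s).card)
        = ∑ h ∈ youngTwo n1 n2, (Finset.univ.filter fun s : Finset (Fin (n1 + n2)) =>
            s.card = m ∧ s.image ⇑(Equiv.swap a b * h) = s).card := by
      refine Finset.sum_congr rfl fun h _ => ?_
      congr 1
      refine Finset.filter_congr fun s _ => ?_
      exact and_congr_left' (by omega)
    rw [he, main_count n1 n2 (m + 1) h1 h2 hk1 hk2 a b ha hb,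
      main_count n1 n2 m h1 h2 (by omega) (by omega) a b ha hb, hf1, hf2]
    push_cast
    field_simp
    ring
end
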